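/- arXiv:1506.08707 — 2 statements merged into one kernel-verified Lean document; each statement's English description precedes it below -/
import Mathlib

section
/- Let g = sl₂(ℂ) viewed as a real Lie algebra, let h₆ = span_ℝ{e₃} where e₃ = [[0,1],[-1,0]], and for b ∈ ℝ let m_b = span_ℝ{e₁, e₂, ie₁, ie₂, ie₃ + b·e₃}. Then g = h₆ ⊕ m_b as real vector spaces, [h₆, m_b] ⊆ m_b, and m_b generates g as a Lie algebra. -/
open Matrix

attribute [local instance 100] LieRing.ofAssociativeRing

/-- The ℝ-linear functional X ↦ Re(X₀₁ - X₁₀) - b·Im(X₀₁ - X₁₀). -/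
noncomputable def stmt5_ent : Matrix (Fin 2) (Fin 2) ℂ →ₗ[ℝ] ℂ where
  toFun X := X 0 1 - X 1 0
  map_add' X Y := by simp [Matrix.add_apply]; ring
  map_smul' r X := by simp [Matrix.smul_apply, smul_sub]

noncomputable def stmt5_chi (b : ℝ) : Matrix (Fin 2) (Fin 2) ℂ →ₗ[ℝ] ℝ :=
  (Complex.reLm - b • Complex.imLm) ∘ₗ stmt5_ent

/-- ad A as an ℝ-linear map. -/
noncomputable def stmt5_ad (A : Matrix (Fin 2) (Fin 2) ℂ) :
    Matrix (Fin 2) (Fin 2) ℂ →ₗ[ℝ] Matrix (Fin 2) (Fin 2) ℂ where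
  toFun Y := A * Y - Y * A
  map_add' X Y := by noncomm_ring
  map_smul' r X := by simp [mul_smul_comm, smul_mul_assoc, smul_sub]

/-- In g = sl₂(ℂ) as a real Lie algebra, with h₆ = span_ℝ{e₃} and
m_b = span_ℝ{e₁, e₂, ie₁, ie₂, ie₃ + b·e₃}, one has g = h₆ ⊕ m_b,
[h₆, m_b] ⊆ m_b, and m_b generates g as a Lie algebra. -/
theorem stmt_5 (b : ℝ) :
    let e₁ : Matrix (Fin 2) (Fin 2) ℂ := !![1, 0; 0, -1]
    let e₂ : Matrix (Fin 2) (Fin 2) ℂ := !![0, 1; 1, 0]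
    let e₃ : Matrix (Fin 2) (Fin 2) ℂ := !![0, 1; -1, 0]
    let h₆ : Submodule ℝ (Matrix (Fin 2) (Fin 2) ℂ) := Submodule.span ℝ {e₃}
    let S : Set (Matrix (Fin 2) (Fin 2) ℂ) :=
      {e₁, e₂, Complex.I • e₁, Complex.I • e₂, Complex.I • e₃ + (b : ℂ) • e₃}
    let m : Submodule ℝ (Matrix (Fin 2) (Fin 2) ℂ) := Submodule.span ℝ S
    -- g = h₆ ⊕ m_b as real vector spaces (g being the trace-zero matrices):
    (h₆ ⊓ m = ⊥) ∧
    (∀ X : Matrix (Fin 2) (Fin 2) ℂ, X.trace = 0 → X ∈ h₆ ⊔ m) ∧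
    (∀ X ∈ h₆ ⊔ m, Matrix.trace X = 0) ∧
    -- [h₆, m_b] ⊆ m_b:
    (∀ x ∈ h₆, ∀ y ∈ m, ⁅x, y⁆ ∈ m) ∧
    -- m_b generates g as a Lie algebra:
    (∀ X : Matrix (Fin 2) (Fin 2) ℂ, X.trace = 0 →
      X ∈ LieSubalgebra.lieSpan ℝ (Matrix (Fin 2) (Fin 2) ℂ) S) := by
  intro e₁ e₂ e₃ h₆ S m
  have hS1 : e₁ ∈ S := by left; rfl
  have hS2 : e₂ ∈ S := by right; left; rfl
  have hS3 : Complex.I • e₁ ∈ S := by right; right; left; rfl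
  have hS4 : Complex.I • e₂ ∈ S := by right; right; right; left; rfl
  have hS5 : Complex.I • e₃ + (b : ℂ) • e₃ ∈ S := by right; right; right; right; rfl
  have he₁ : e₁ ∈ m := Submodule.subset_span hS1
  have he₂ : e₂ ∈ m := Submodule.subset_span hS2
  have hIe₁ : Complex.I • e₁ ∈ m := Submodule.subset_span hS3
  have hIe₂ : Complex.I • e₂ ∈ m := Submodule.subset_span hS4
  have h5 : Complex.I • e₃ + (b : ℂ) • e₃ ∈ m := Submodule.subset_span hS5
  have he₃h : e₃ ∈ h₆ := Submodule.mem_span_singleton_self _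
  have hbsmul : (b : ℂ) • e₃ = b • e₃ := by
    ext i j; simp [Matrix.smul_apply, Complex.real_smul]
  -- decomposition of trace-zero matrices
  have hdecomp : ∀ X : Matrix (Fin 2) (Fin 2) ℂ, X.trace = 0 →
      X = (X 0 0).re • e₁ + (X 0 0).im • (Complex.I • e₁)
        + (((X 0 1 + X 1 0)/2).re) • e₂ + (((X 0 1 + X 1 0)/2).im) • (Complex.I • e₂)
        + (((X 0 1 - X 1 0)/2).re) • e₃ + (((X 0 1 - X 1 0)/2).im) • (Complex.I • e₃) := by
    intro X h
    rw [Matrix.trace_fin_two] at h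
    have h11 : X 1 1 = -X 0 0 := by linear_combination h
    ext i j
    fin_cases i <;> fin_cases j <;>
      simp [e₁, e₂, e₃, Matrix.add_apply, Matrix.smul_apply, Complex.real_smul, h11] <;>
      · apply Complex.ext <;> simp <;> ring
  refine ⟨?_, ?_, ?_, ?_, ?_⟩
  · -- h₆ ⊓ m = ⊥
    have hker : m ≤ LinearMap.ker (stmt5_chi b) := by
      rw [Submodule.span_le]
      rintro y hy
      rcases hy with rfl | rfl | rfl | rfl | rfl <;>
        simp [LinearMap.mem_ker, stmt5_chi, stmt5_ent, e₁, e₂, e₃] <;> ring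
    rw [eq_bot_iff]
    rintro x hx
    obtain ⟨hx1, hx2⟩ := Submodule.mem_inf.mp hx
    obtain ⟨t, rfl⟩ := Submodule.mem_span_singleton.mp hx1
    have h0 : stmt5_chi b (t • e₃) = 0 := hker hx2
    have h2 : stmt5_chi b (t • e₃) = 2 * t := by
      simp [stmt5_chi, stmt5_ent, e₃]; ring
    have : t = 0 := by linarith [h0, h2.symm.trans h0]
    simp [this]
  · -- surjectivity onto trace-zero
    intro X hX
    have hIe₃ : Complex.I • e₃ ∈ h₆ ⊔ m := by
      have : Complex.I • e₃ = (Complex.I • e₃ + (b : ℂ) • e₃) - b • e₃ := by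
        rw [hbsmul] at *; abel
      rw [this]
      exact sub_mem (Submodule.mem_sup_right h5)
        (Submodule.mem_sup_left (Submodule.smul_mem _ _ he₃h))
    rw [hdecomp X hX]
    refine add_mem (add_mem (add_mem (add_mem (add_mem ?_ ?_) ?_) ?_) ?_) ?_ <;>
      first
      | exact Submodule.smul_mem _ _ (Submodule.mem_sup_right ‹_›)
      | exact Submodule.smul_mem _ _ (Submodule.mem_sup_left he₃h)
      | exact Submodule.smul_mem _ _ hIe₃
      | exact Submodule.smul_mem _ _ (Submodule.mem_sup_right he₁)
      | exact Submodule.smul_mem _ _ (Submodule.mem_sup_right hIe₁)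
      | exact Submodule.smul_mem _ _ (Submodule.mem_sup_right he₂)
      | exact Submodule.smul_mem _ _ (Submodule.mem_sup_right hIe₂)
  · -- trace zero on h₆ ⊔ m
    intro X hX
    have : h₆ ⊔ m ≤ LinearMap.ker ((Matrix.traceLinearMap (Fin 2) ℂ ℂ).restrictScalars ℝ) := by
      apply sup_le <;> rw [Submodule.span_le] <;> rintro y hy
      · rcases hy with rfl
        simp [e₃, Matrix.trace_fin_two]
      · rcases hy with rfl | rfl | rfl | rfl | rfl <;>
          simp [e₁, e₂, e₃, Matrix.trace_fin_two]
    simpa using this hX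
  · -- bracket
    intro x hx y hy
    obtain ⟨t, rfl⟩ := Submodule.mem_span_singleton.mp hx
    have hmap : m ≤ Submodule.comap (stmt5_ad e₃) m := by
      rw [Submodule.span_le]
      rintro y hy
      rcases hy with rfl | rfl | rfl | rfl | rfl
      · have : stmt5_ad e₃ e₁ = (-2 : ℝ) • e₂ := by
          ext i j
          fin_cases i <;> fin_cases j <;>
            simp [stmt5_ad, e₁, e₂, e₃, Matrix.mul_apply, Fin.sum_univ_two] <;> norm_num
        refine SetLike.mem_coe.mpr (Submodule.mem_comap.mpr ?_)
        rw [this]; exact Submodule.smul_mem _ _ he₂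
      · have : stmt5_ad e₃ e₂ = (2 : ℝ) • e₁ := by
          ext i j
          fin_cases i <;> fin_cases j <;>
            simp [stmt5_ad, e₁, e₂, e₃, Matrix.mul_apply, Fin.sum_univ_two] <;> norm_num
        refine SetLike.mem_coe.mpr (Submodule.mem_comap.mpr ?_)
        rw [this]; exact Submodule.smul_mem _ _ he₁
      · have : stmt5_ad e₃ (Complex.I • e₁) = (-2 : ℝ) • (Complex.I • e₂) := by
          ext i j
          fin_cases i <;> fin_cases j <;>
            simp [stmt5_ad, e₁, e₂, e₃, Matrix.mul_apply, Fin.sum_univ_two] <;> ring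
        refine SetLike.mem_coe.mpr (Submodule.mem_comap.mpr ?_)
        rw [this]; exact Submodule.smul_mem _ _ hIe₂
      · have : stmt5_ad e₃ (Complex.I • e₂) = (2 : ℝ) • (Complex.I • e₁) := by
          ext i j
          fin_cases i <;> fin_cases j <;>
            simp [stmt5_ad, e₁, e₂, e₃, Matrix.mul_apply, Fin.sum_univ_two] <;> ring
        refine SetLike.mem_coe.mpr (Submodule.mem_comap.mpr ?_)
        rw [this]; exact Submodule.smul_mem _ _ hIe₁
      · have : stmt5_ad e₃ (Complex.I • e₃ + (b : ℂ) • e₃) = 0 := by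
          ext i j
          fin_cases i <;> fin_cases j <;>
            simp [stmt5_ad, e₃, Matrix.mul_apply, Fin.sum_univ_two] <;> ring
        refine SetLike.mem_coe.mpr (Submodule.mem_comap.mpr ?_)
        rw [this]; exact Submodule.zero_mem _
    have hbr : ⁅t • e₃, y⁆ = t • (stmt5_ad e₃ y) := by
      simp [stmt5_ad, Ring.lie_def, smul_sub, smul_mul_assoc, mul_smul_comm]
    rw [hbr]
    exact Submodule.smul_mem _ _ (hmap hy)
  · -- generation
    intro X hX
    set K := LieSubalgebra.lieSpan ℝ (Matrix (Fin 2) (Fin 2) ℂ) S with hK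
    have hsub : S ⊆ K := LieSubalgebra.subset_lieSpan
    have ke₁ : e₁ ∈ K := hsub hS1
    have ke₂ : e₂ ∈ K := hsub hS2
    have kIe₁ : Complex.I • e₁ ∈ K := hsub hS3
    have kIe₂ : Complex.I • e₂ ∈ K := hsub hS4
    have k5 : Complex.I • e₃ + (b : ℂ) • e₃ ∈ K := hsub hS5
    have ke₃ : e₃ ∈ K := by
      have hbr : ⁅e₁, e₂⁆ = (2 : ℝ) • e₃ := by
        ext i j
        fin_cases i <;> fin_cases j <;>
          simp [Ring.lie_def, e₁, e₂, e₃, Matrix.mul_apply, Fin.sum_univ_two] <;> norm_num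
      have : e₃ = (1/2 : ℝ) • ⁅e₁, e₂⁆ := by rw [hbr, smul_smul]; norm_num
      rw [this]
      exact K.smul_mem _ (K.lie_mem ke₁ ke₂)
    have kIe₃ : Complex.I • e₃ ∈ K := by
      have : Complex.I • e₃ = (Complex.I • e₃ + (b : ℂ) • e₃) - b • e₃ := by
        rw [hbsmul] at *; abel
      rw [this]
      exact K.sub_mem k5 (K.smul_mem _ ke₃)
    rw [hdecomp X hX]
    exact K.add_mem (K.add_mem (K.add_mem (K.add_mem (K.add_mem
      (K.smul_mem _ ke₁) (K.smul_mem _ kIe₁)) (K.smul_mem _ ke₂))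
      (K.smul_mem _ kIe₂)) (K.smul_mem _ ke₃)) (K.smul_mem _ kIe₃)
end

section
/- Let g = sl₂(ℂ) viewed as a real Lie algebra and let h₅ = span_ℝ{e₂ + e₃} where e₂ = [[0,1],[1,0]], e₃ = [[0,1],[-1,0]]. Then there is no real vector subspace m complementary to h₅ in g with [h₅, m] ⊆ m. (In fact for any complement m containing an element of the form V₁ = e₁ + a(e₂+e₃), a ∈ ℝ, one has [e₂+e₃, V₁] = −2(e₂+e₃) ∈ h₅ \ {0}, contradicting invariance.) -/
open Matrix

/-- In g = sl₂(ℂ) as a real Lie algebra, the one-dimensional subalgebra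
h₅ = span_ℝ{e₂ + e₃} admits no complementary subspace m in g with
[h₅, m] ⊆ m. -/
theorem stmt_6 :
    let e₂ : Matrix (Fin 2) (Fin 2) ℂ := !![0, 1; 1, 0]
    let e₃ : Matrix (Fin 2) (Fin 2) ℂ := !![0, 1; -1, 0]
    let h₅ : Submodule ℝ (Matrix (Fin 2) (Fin 2) ℂ) := Submodule.span ℝ {e₂ + e₃}
    ¬ ∃ m : Submodule ℝ (Matrix (Fin 2) (Fin 2) ℂ),
        (∀ X ∈ m, Matrix.trace X = 0) ∧
        (h₅ ⊓ m = ⊥) ∧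
        (∀ X : Matrix (Fin 2) (Fin 2) ℂ, X.trace = 0 → X ∈ h₅ ⊔ m) ∧
        (∀ x ∈ h₅, ∀ y ∈ m, ⁅x, y⁆ ∈ m) := by
  intro e₂ e₃ h₅
  rintro ⟨m, -, hinf, hsup, hinv⟩
  set X : Matrix (Fin 2) (Fin 2) ℂ := e₂ + e₃ with hX
  have hXval : X = !![0, 2; 0, 0] := by
    simp [hX, e₂, e₃]
    norm_num [← Matrix.ext_iff, Fin.forall_fin_two]
  set e₁ : Matrix (Fin 2) (Fin 2) ℂ := !![1, 0; 0, -1] with he₁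
  have htr : e₁.trace = 0 := by simp [he₁, Matrix.trace_fin_two]
  obtain ⟨x, hx, y, hy, hxy⟩ := Submodule.mem_sup.mp (hsup e₁ htr)
  obtain ⟨c, hc⟩ := Submodule.mem_span_singleton.mp hx
  have hbr : ⁅X, y⁆ = (-2 : ℝ) • X := by
    have hyval : y = e₁ - c • X := by
      rw [← hxy, ← hc]; abel
    rw [hyval]
    simp only [Ring.lie_def, Matrix.mul_sub, Matrix.sub_mul, Matrix.mul_smul,
      Matrix.smul_mul]
    rw [hXval, he₁]
    norm_num [← Matrix.ext_iff, Fin.forall_fin_two, Matrix.mul_apply, Fin.sum_univ_two,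
      Matrix.smul_apply]
    refine ⟨?_, ?_⟩ <;> funext i <;> exact i.elim0
  have hmem : (-2 : ℝ) • X ∈ h₅ ⊓ m := by
    constructor
    · exact Submodule.smul_mem _ _ (Submodule.mem_span_singleton_self X)
    · rw [← hbr]; exact hinv X (Submodule.mem_span_singleton_self X) y hy
  rw [hinf] at hmem
  have : X = 0 := by
    have h2 : (-2 : ℝ) • X = 0 := hmem
    have := congrArg (fun M => ((-2 : ℝ)⁻¹ • M : Matrix (Fin 2) (Fin 2) ℂ)) h2
    simpa [smul_smul] using this
  rw [hXval] at this
  have := congrFun (congrFun this 0) 1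
  norm_num at this
end
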